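/- Fix a with 0 < a < π/2. The function f(x) = arccos(cos(a)² + sin(a)²·cos(x))/x is strictly decreasing on (0, π), and in particular f(x) ≥ f(π) = 2a/π for all x ∈ (0, π]. -/

import Mathlib

open Real Set

private lemma phi_anti {k : ℝ} (hk0 : 0 < k) (hk1 : k < 1) :
    StrictAntiOn (fun x : ℝ => k * Real.cos (x/2) / Real.sqrt (1 - k^2 * Real.sin (x/2)^2))
      (Set.Icc 0 Real.pi) := by
  intro x hx y hy hxy
  have hc2lt : Real.cos (y/2) < Real.cos (x/2) := by
    apply Real.cos_lt_cos_of_nonneg_of_le_pi (by linarith [hx.1]) (by linarith [hy.2, Real.pi_pos]) (by linarith)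
  have hc1le : Real.cos (x/2) ≤ 1 := Real.cos_le_one _
  have hc2nonneg : 0 ≤ Real.cos (y/2) :=
    Real.cos_nonneg_of_mem_Icc ⟨by linarith [hy.1, Real.pi_pos], by linarith [hy.2]⟩
  have hs1sq : Real.sin (x/2)^2 = 1 - Real.cos (x/2)^2 := Real.sin_sq (x/2)
  have hs2sq : Real.sin (y/2)^2 = 1 - Real.cos (y/2)^2 := Real.sin_sq (y/2)
  have h1pos : (0:ℝ) < 1 - k^2 * Real.sin (x/2)^2 := by
    nlinarith [Real.sin_sq_le_one (x/2)]
  have h2pos : (0:ℝ) < 1 - k^2 * Real.sin (y/2)^2 := by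
    nlinarith [Real.sin_sq_le_one (y/2)]
  have hs1pos : 0 < Real.sqrt (1 - k^2 * Real.sin (x/2)^2) := Real.sqrt_pos.2 h1pos
  have hs2pos : 0 < Real.sqrt (1 - k^2 * Real.sin (y/2)^2) := Real.sqrt_pos.2 h2pos
  have hs1sq' : (Real.sqrt (1 - k^2 * Real.sin (x/2)^2))^2 = 1 - k^2 * Real.sin (x/2)^2 :=
    Real.sq_sqrt h1pos.le
  have hs2sq' : (Real.sqrt (1 - k^2 * Real.sin (y/2)^2))^2 = 1 - k^2 * Real.sin (y/2)^2 :=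
    Real.sq_sqrt h2pos.le
  set s1 := Real.sqrt (1 - k^2 * Real.sin (x/2)^2)
  set s2 := Real.sqrt (1 - k^2 * Real.sin (y/2)^2)
  rw [div_lt_div_iff₀ hs2pos hs1pos]
  have hc1pos : 0 < Real.cos (x/2) := lt_of_le_of_lt hc2nonneg hc2lt
  have hcc : Real.cos (y/2)^2 < Real.cos (x/2)^2 := by nlinarith
  have hk2 : (0:ℝ) < 1 - k^2 := by nlinarith
  have e1 : (k * Real.cos (y/2) * s1)^2
      = k^2 * Real.cos (y/2)^2 * (1 - k^2*(1 - Real.cos (x/2)^2)) := by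
    rw [mul_pow, mul_pow, hs1sq', hs1sq]
  have e2 : (k * Real.cos (x/2) * s2)^2
      = k^2 * Real.cos (x/2)^2 * (1 - k^2*(1 - Real.cos (y/2)^2)) := by
    rw [mul_pow, mul_pow, hs2sq', hs2sq]
  have hsq : (k * Real.cos (y/2) * s1)^2 < (k * Real.cos (x/2) * s2)^2 := by
    rw [e1, e2]
    nlinarith [mul_pos (mul_pos (pow_pos hk0 2) hk2) (sub_pos.2 hcc)]
  have hle : 0 ≤ k * Real.cos (x/2) * s2 := by positivity
  exact lt_of_pow_lt_pow_left₀ 2 hle hsq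

private lemma g_deriv {k : ℝ} (hk0 : 0 < k) (hk1 : k < 1) (x : ℝ) :
    HasDerivAt (fun y : ℝ => 2 * Real.arcsin (k * Real.sin (y/2)))
      (k * Real.cos (x/2) / Real.sqrt (1 - k^2 * Real.sin (x/2)^2)) x := by
  have hlt : |k * Real.sin (x/2)| < 1 := by
    rw [abs_mul, abs_of_pos hk0]
    calc k * |Real.sin (x/2)| ≤ k * 1 := by
          exact mul_le_mul_of_nonneg_left (abs_sin_le_one _) hk0.le
      _ < 1 := by linarith
  have ht1 : k * Real.sin (x/2) ≠ -1 := by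
    intro h; rw [h] at hlt; simp at hlt
  have ht2 : k * Real.sin (x/2) ≠ 1 := by
    intro h; rw [h] at hlt; simp at hlt
  have hinner : HasDerivAt (fun y : ℝ => k * Real.sin (y/2))
      (k * (Real.cos (x/2) * (1/2))) x := by
    have h1 : HasDerivAt (fun y : ℝ => y/2) (1/2) x := by
      simpa using (hasDerivAt_id x).div_const 2
    exact ((Real.hasDerivAt_sin (x/2)).comp x h1).const_mul k
  have harc := (Real.hasDerivAt_arcsin ht1 ht2).comp x hinner
  have := harc.const_mul 2
  refine this.congr_deriv ?_
  have hrw : 1 - (k * Real.sin (x/2))^2 = 1 - k^2 * Real.sin (x/2)^2 := by ring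
  rw [hrw]
  have hpos : (0:ℝ) < 1 - k^2 * Real.sin (x/2)^2 := by
    nlinarith [Real.sin_sq_le_one (x/2), abs_sin_le_one (x/2)]
  have hsne : Real.sqrt (1 - k^2 * Real.sin (x/2)^2) ≠ 0 := (Real.sqrt_pos.2 hpos).ne'
  field_simp

private lemma F_anti {k : ℝ} (hk0 : 0 < k) (hk1 : k < 1) :
    StrictAntiOn (fun x : ℝ => 2 * Real.arcsin (k * Real.sin (x/2)) / x)
      (Set.Ioc 0 Real.pi) := by
  set g : ℝ → ℝ := fun y => 2 * Real.arcsin (k * Real.sin (y/2)) with hg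
  set φ : ℝ → ℝ := fun y => k * Real.cos (y/2) / Real.sqrt (1 - k^2 * Real.sin (y/2)^2) with hφ
  have hgd : ∀ x, HasDerivAt g (φ x) x := fun x => g_deriv hk0 hk1 x
  have hgcont : Continuous g := by
    have : Continuous fun y : ℝ => k * Real.sin (y/2) := by fun_prop
    exact continuous_const.mul (Real.continuous_arcsin.comp this)
  have hg0 : g 0 = 0 := by norm_num [hg]
  apply strictAntiOn_of_deriv_neg (convex_Ioc 0 Real.pi)
  · exact (hgcont.continuousOn).div continuousOn_id (fun x hx => ne_of_gt hx.1)
  · rw [interior_Ioc]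
    intro x hx
    obtain ⟨c, hc, hceq⟩ := exists_hasDerivAt_eq_slope g φ hx.1
      hgcont.continuousOn (fun y _ => hgd y)
    have hgx : g x = x * φ c := by
      rw [hg0, sub_zero, sub_zero, eq_div_iff (ne_of_gt hx.1)] at hceq
      linarith [hceq]
    have hφlt : φ x < φ c :=
      phi_anti hk0 hk1 ⟨hc.1.le, by linarith [hc.2, hx.2]⟩ ⟨hx.1.le, hx.2.le⟩ hc.2
    have hF : HasDerivAt (fun y : ℝ => g y / y) ((φ x * x - g x * 1) / x^2) x :=
      (hgd x).div (hasDerivAt_id x) (ne_of_gt hx.1)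
    rw [hF.deriv]
    apply div_neg_of_neg_of_pos
    · nlinarith [hx.1]
    · exact pow_pos hx.1 2

private lemma identity_lemma {a : ℝ} (ha0 : 0 < a) (ha : a < Real.pi / 2) {x : ℝ}
    (hx0 : 0 ≤ x) (hxπ : x ≤ Real.pi) :
    Real.arccos (Real.cos a ^ 2 + Real.sin a ^ 2 * Real.cos x)
      = 2 * Real.arcsin (Real.sin a * Real.sin (x/2)) := by
  have hsa0 : 0 < Real.sin a := Real.sin_pos_of_pos_of_lt_pi ha0 (by linarith [Real.pi_pos])
  have hsa1 : Real.sin a ≤ 1 := Real.sin_le_one a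
  have hsx : 0 ≤ Real.sin (x/2) :=
    Real.sin_nonneg_of_nonneg_of_le_pi (by linarith) (by linarith [Real.pi_pos])
  have hsx1 : Real.sin (x/2) ≤ 1 := Real.sin_le_one _
  set t := Real.sin a * Real.sin (x/2) with htdef
  have ht0 : 0 ≤ t := mul_nonneg hsa0.le hsx
  have ht1 : t ≤ 1 := by nlinarith
  have harc0 : 0 ≤ Real.arcsin t := Real.arcsin_nonneg.2 ht0
  have harcle : Real.arcsin t ≤ Real.pi / 2 := Real.arcsin_le_pi_div_two t
  have hcos2 : Real.cos (2 * Real.arcsin t) = 1 - 2 * t^2 := by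
    rw [Real.cos_two_mul, Real.cos_arcsin]
    rw [Real.sq_sqrt (by nlinarith)]
    ring
  have hcosx : Real.cos x = 2 * Real.cos (x/2)^2 - 1 := by
    rw [← Real.cos_two_mul]; ring_nf
  have hval : 1 - 2 * t^2 = Real.cos a ^ 2 + Real.sin a ^ 2 * Real.cos x := by
    have h1 := Real.sin_sq_add_cos_sq a
    have h2 := Real.sin_sq_add_cos_sq (x/2)
    rw [hcosx, htdef]; nlinarith
  rw [← hval, ← hcos2, Real.arccos_cos (by linarith) (by linarith)]

theorem stmt_14 (a : ℝ) (ha0 : 0 < a) (ha : a < Real.pi / 2) :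
    StrictAntiOn (fun x : ℝ => Real.arccos (Real.cos a ^ 2 + Real.sin a ^ 2 * Real.cos x) / x)
      (Set.Ioo 0 Real.pi) ∧
    Real.arccos (Real.cos a ^ 2 + Real.sin a ^ 2 * Real.cos Real.pi) / Real.pi
      = 2 * a / Real.pi ∧
    ∀ x ∈ Set.Ioc 0 Real.pi,
      Real.arccos (Real.cos a ^ 2 + Real.sin a ^ 2 * Real.cos x) / x ≥ 2 * a / Real.pi := by
  have hpi := Real.pi_pos
  have hsa0 : 0 < Real.sin a := Real.sin_pos_of_pos_of_lt_pi ha0 (by linarith)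
  have hsa1 : Real.sin a < 1 := by
    have h := Real.sin_lt_sin_of_lt_of_le_pi_div_two (x := a) (y := Real.pi/2)
      (by linarith) (le_refl _) ha
    rwa [Real.sin_pi_div_two] at h
  have hF := F_anti hsa0 hsa1
  have hkey : ∀ x ∈ Set.Ioc 0 Real.pi,
      Real.arccos (Real.cos a ^ 2 + Real.sin a ^ 2 * Real.cos x) / x
        = 2 * Real.arcsin (Real.sin a * Real.sin (x/2)) / x := by
    intro x hx
    rw [identity_lemma ha0 ha hx.1.le hx.2]
  have hFpi : 2 * Real.arcsin (Real.sin a * Real.sin (Real.pi/2)) / Real.pi = 2 * a / Real.pi := by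
    rw [Real.sin_pi_div_two, mul_one, Real.arcsin_sin (by linarith) (by linarith)]
  have hpart2 : Real.arccos (Real.cos a ^ 2 + Real.sin a ^ 2 * Real.cos Real.pi) / Real.pi
      = 2 * a / Real.pi := by
    rw [hkey Real.pi ⟨hpi, le_refl _⟩, hFpi]
  refine ⟨?_, hpart2, ?_⟩
  · intro x hx y hy hxy
    show Real.arccos (Real.cos a ^ 2 + Real.sin a ^ 2 * Real.cos y) / y
      < Real.arccos (Real.cos a ^ 2 + Real.sin a ^ 2 * Real.cos x) / x
    rw [hkey x ⟨hx.1, hx.2.le⟩, hkey y ⟨hy.1, hy.2.le⟩]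
    exact hF ⟨hx.1, hx.2.le⟩ ⟨hy.1, hy.2.le⟩ hxy
  · intro x hx
    rw [hkey x hx]
    rcases eq_or_lt_of_le hx.2 with h | h
    · rw [h, hFpi]
    · have h2 : 2 * Real.arcsin (Real.sin a * Real.sin (Real.pi/2)) / Real.pi
          < 2 * Real.arcsin (Real.sin a * Real.sin (x/2)) / x :=
        hF ⟨hx.1, hx.2⟩ ⟨hpi, le_refl _⟩ h
      rw [hFpi] at h2
      exact h2.le
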